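/- arXiv:2204.00702 — 12 statements merged into one kernel-verified Lean document; each statement's English description precedes it below -/
import Mathlib

section
/- Let A, B, Q, Y, M be real n×n matrices such that Y = A·Y·Aᵀ + Q and M = Aᵀ·M·A + Bᵀ. Then trace(B·Y) = trace(Qᵀ·M). -/
open Matrix

/-- **Property of the solution to Lyapunov equation.**
If `Y = A * Y * Aᵀ + Q` and `M = Aᵀ * M * A + Bᵀ`, then
`trace (B * Y) = trace (Qᵀ * M)`. -/
theorem trace_pairing_of_lyapunov {n : ℕ} (A B Q Y M : Matrix (Fin n) (Fin n) ℝ)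
    (hY : Y = A * Y * Aᵀ + Q) (hM : M = Aᵀ * M * A + Bᵀ) :
    (B * Y).trace = (Qᵀ * M).trace := by
  have hB : B = Mᵀ - Aᵀ * Mᵀ * A := by
    have h := congrArg Matrix.transpose hM
    simp only [transpose_add, transpose_mul, transpose_transpose] at h
    rw [mul_assoc]; exact eq_sub_of_add_eq' h.symm
  have hQ : Qᵀ = Yᵀ - A * Yᵀ * Aᵀ := by
    have h := congrArg Matrix.transpose hY
    simp only [transpose_add, transpose_mul, transpose_transpose] at h
    rw [mul_assoc]; exact eq_sub_of_add_eq' h.symm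
  rw [hB, hQ, Matrix.sub_mul, Matrix.sub_mul, trace_sub, trace_sub]
  congr 1
  · rw [← trace_transpose (Mᵀ * Y)]
    simp [transpose_mul]
  · rw [← trace_transpose (Aᵀ * Mᵀ * A * Y)]
    simp only [transpose_mul, transpose_transpose]
    rw [show Yᵀ * (Aᵀ * (M * A)) = Yᵀ * Aᵀ * (M * A) from by rw [mul_assoc],
      trace_mul_comm, mul_assoc, mul_assoc]
    rw [trace_mul_comm]; congr 1; noncomm_ring
end

section
/- Let A be a real n×n matrix such that every eigenvalue of A (viewed as a complex matrix, i.e., every element of the spectrum of A over ℂ) has modulus strictly less than 1, and let Q be a real n×n matrix. Then there exists a unique real n×n matrix Y satisfying the discrete Lyapunov equation Y = A·Y·Aᵀ + Q. -/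
open Matrix

section Aux

attribute [local instance] Matrix.linftyOpNormedRing Matrix.linftyOpNormedAlgebra

lemma lyap_complete (n : ℕ) : CompleteSpace (Matrix (Fin n) (Fin n) ℂ) :=
  inferInstance

attribute [local instance] lyap_complete

lemma lyap_spectrum_transpose {n : ℕ} (B : Matrix (Fin n) (Fin n) ℂ) :
    spectrum ℂ Bᵀ = spectrum ℂ B := by
  ext μ
  simp only [spectrum.mem_iff, not_iff_not]
  have h : algebraMap ℂ (Matrix (Fin n) (Fin n) ℂ) μ - Bᵀ
      = (algebraMap ℂ (Matrix (Fin n) (Fin n) ℂ) μ - B)ᵀ := by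
    rw [transpose_sub]
    congr 1
    simp [Matrix.algebraMap_eq_diagonal]
  rw [h, Matrix.isUnit_iff_isUnit_det, Matrix.det_transpose, ← Matrix.isUnit_iff_isUnit_det]

lemma lyap_tendsto_pow_norm_zero {n : ℕ} [Nonempty (Fin n)] (B : Matrix (Fin n) (Fin n) ℂ)
    (hB : ∀ μ ∈ spectrum ℂ B, ‖μ‖ < 1) :
    Filter.Tendsto (fun k => ‖B ^ k‖) Filter.atTop (nhds 0) := by
  have hsr : spectralRadius ℂ B < 1 := by
    have h := spectrum.spectralRadius_lt_of_forall_lt (a := B) (r := 1) ?_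
    · simpa using h
    · intro z hz
      have := hB z hz
      simpa [← NNReal.coe_lt_coe, Complex.norm_def] using this
  obtain ⟨r, hr1, hr2⟩ := exists_between hsr
  lift r to NNReal using (hr2.trans ENNReal.one_lt_top).ne
  have hr2' : r < 1 := by exact_mod_cast hr2
  have hG := spectrum.pow_nnnorm_pow_one_div_tendsto_nhds_spectralRadius B
  have hev : ∀ᶠ k : ℕ in Filter.atTop, (‖B ^ k‖₊ : ENNReal) ^ (1 / (k : ℝ)) < (r : ENNReal) :=
    hG.eventually_lt_const hr1
  have hev2 : ∀ᶠ k : ℕ in Filter.atTop, ‖B ^ k‖ ≤ (r : ℝ) ^ k := by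
    filter_upwards [hev, Filter.eventually_gt_atTop 0] with k hk hk0
    have hkR : (0 : ℝ) < (k : ℝ) := by exact_mod_cast hk0
    have key : (‖B ^ k‖₊ : ENNReal) < (r : ENNReal) ^ k := by
      calc (‖B ^ k‖₊ : ENNReal)
          = ((‖B ^ k‖₊ : ENNReal) ^ (1 / (k : ℝ))) ^ (k : ℝ) := by
            rw [← ENNReal.rpow_mul, one_div, inv_mul_cancel₀ hkR.ne', ENNReal.rpow_one]
        _ < (r : ENNReal) ^ (k : ℝ) := ENNReal.rpow_lt_rpow hk hkR
        _ = (r : ENNReal) ^ k := by rw [ENNReal.rpow_natCast]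
    have key2 : ‖B ^ k‖₊ < r ^ k := by
      rw [← ENNReal.coe_pow, ENNReal.coe_lt_coe] at key
      exact key
    calc ‖B ^ k‖ = ((‖B ^ k‖₊ : NNReal) : ℝ) := rfl
      _ ≤ ((r ^ k : NNReal) : ℝ) := by exact_mod_cast key2.le
      _ = (r : ℝ) ^ k := by push_cast; ring
  exact squeeze_zero' (Filter.Eventually.of_forall fun k => norm_nonneg _) hev2
    (tendsto_pow_atTop_nhds_zero_of_lt_one r.coe_nonneg hr2')

lemma lyap_aux {n : ℕ} (B : Matrix (Fin n) (Fin n) ℂ)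
    (hB : ∀ μ ∈ spectrum ℂ B, ‖μ‖ < 1)
    (D : Matrix (Fin n) (Fin n) ℂ) (hD : D = B * D * Bᵀ) : D = 0 := by
  rcases Nat.eq_zero_or_pos n with h0 | hpos
  · subst h0; exact Subsingleton.elim _ _
  have hne : Nonempty (Fin n) := ⟨⟨0, hpos⟩⟩
  have hBT : ∀ μ ∈ spectrum ℂ Bᵀ, ‖μ‖ < 1 := by
    rw [lyap_spectrum_transpose]; exact hB
  have hiter : ∀ k, D = B ^ k * D * Bᵀ ^ k := by
    intro k
    induction k with
    | zero => simp
    | succ k ih =>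
      calc D = B * D * Bᵀ := hD
        _ = B * (B ^ k * D * Bᵀ ^ k) * Bᵀ := by rw [← ih]
        _ = B ^ (k + 1) * D * Bᵀ ^ (k + 1) := by
            rw [pow_succ', pow_succ]
            simp only [mul_assoc]
  by_contra hne0
  have hDpos : 0 < ‖D‖ := norm_pos_iff.mpr hne0
  have h1 := lyap_tendsto_pow_norm_zero B hB
  have h2 := lyap_tendsto_pow_norm_zero Bᵀ hBT
  have h3 : Filter.Tendsto (fun k => ‖B ^ k‖ * ‖Bᵀ ^ k‖ * ‖D‖) Filter.atTop (nhds 0) := by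
    have := (h1.mul h2).mul_const ‖D‖
    simpa using this
  have h4 : ∀ k, ‖D‖ ≤ ‖B ^ k‖ * ‖Bᵀ ^ k‖ * ‖D‖ := by
    intro k
    calc ‖D‖ = ‖B ^ k * D * Bᵀ ^ k‖ := by rw [← hiter k]
      _ ≤ ‖B ^ k * D‖ * ‖Bᵀ ^ k‖ := norm_mul_le _ _
      _ ≤ ‖B ^ k‖ * ‖D‖ * ‖Bᵀ ^ k‖ :=
          mul_le_mul_of_nonneg_right (norm_mul_le _ _) (norm_nonneg _)
      _ = ‖B ^ k‖ * ‖Bᵀ ^ k‖ * ‖D‖ := by ring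
  have : ‖D‖ ≤ 0 := ge_of_tendsto' h3 h4
  linarith

end Aux

/-- **Existence and uniqueness of the solution of the discrete Lyapunov equation.**
If every complex eigenvalue of the real matrix `A` has modulus strictly less than `1`,
then for any real matrix `Q` there is a unique real matrix `Y` with `Y = A * Y * Aᵀ + Q`. -/
theorem discrete_lyapunov_existsUnique {n : ℕ} (A Q : Matrix (Fin n) (Fin n) ℝ)
    (hA : ∀ μ ∈ spectrum ℂ (A.map (algebraMap ℝ ℂ)), ‖μ‖ < 1) :
    ∃! Y : Matrix (Fin n) (Fin n) ℝ, Y = A * Y * Aᵀ + Q := by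
  have hinj : ∀ Y : Matrix (Fin n) (Fin n) ℝ, Y = A * Y * Aᵀ → Y = 0 := by
    intro Y hY
    have h2 : Y.map (algebraMap ℝ ℂ) = (A.map (algebraMap ℝ ℂ)) * (Y.map (algebraMap ℝ ℂ)) *
        (A.map (algebraMap ℝ ℂ))ᵀ := by
      rw [← Matrix.transpose_map, ← Matrix.map_mul, ← Matrix.map_mul, ← hY]
    have h0 := lyap_aux (A.map (algebraMap ℝ ℂ)) hA _ h2
    ext i j
    have := congrFun (congrFun h0 i) j
    simpa [Matrix.map_apply] using this
  let L : Matrix (Fin n) (Fin n) ℝ →ₗ[ℝ] Matrix (Fin n) (Fin n) ℝ :=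
    { toFun := fun Y => Y - A * Y * Aᵀ
      map_add' := by
        intro X Y
        simp only [Matrix.mul_add, Matrix.add_mul]
        abel
      map_smul' := by
        intro c Y
        simp only [RingHom.id_apply, Matrix.mul_smul, Matrix.smul_mul, smul_sub] }
  have hLinj : Function.Injective L := by
    rw [← LinearMap.ker_eq_bot, LinearMap.ker_eq_bot']
    intro Y hY
    apply hinj
    have h : Y - A * Y * Aᵀ = 0 := hY
    exact sub_eq_zero.mp h
  have hLsurj : Function.Surjective L := LinearMap.injective_iff_surjective.mp hLinj
  obtain ⟨Y, hY⟩ := hLsurj Q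
  have hYeq : Y - A * Y * Aᵀ = Q := hY
  refine ⟨Y, ?_, ?_⟩
  · rw [← hYeq]; abel
  · intro Z hZ
    have hYeq2 : Y = A * Y * Aᵀ + Q := by rw [← hYeq]; abel
    have hdiff : Z - Y = A * (Z - Y) * Aᵀ := by
      calc Z - Y = (A * Z * Aᵀ + Q) - (A * Y * Aᵀ + Q) := by rw [← hZ, ← hYeq2]
        _ = A * Z * Aᵀ - A * Y * Aᵀ := by abel
        _ = A * (Z - Y) * Aᵀ := by rw [Matrix.mul_sub, Matrix.sub_mul]
    exact sub_eq_zero.mp (hinj _ hdiff)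
end

section
/- Let E ∈ ℝ^{n×n}, F ∈ ℝ^{n×p}, G ∈ ℝ^{m×n}, H ∈ ℝ^{m×p} and Ē ∈ ℝ^{n×n}, F̄ ∈ ℝ^{n×p}, Ḡ ∈ ℝ^{m×n} satisfy E = Ē, F = Ē·F̄, G = Ḡ, H = Ḡ·F̄. Let y : ℕ → ℝ^p with y(0) = 0, and let x_c, ξ_c : ℕ → ℝ^n and u₁, u₂ : ℕ → ℝ^m satisfy, for all t ≥ 0: x_c(t+1) = E·x_c(t) + F·y(t), u₁(t) = G·x_c(t) + H·y(t), and ξ_c(t+1) = Ē·ξ_c(t) + F̄·y(t+1), u₂(t) = Ḡ·ξ_c(t). If x_c(0) = ξ_c(0), then u₁(t) = u₂(t) for all t ≥ 0. -/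
open Matrix

/-- **Equivalent compensator forms.**
If `E = Ē`, `F = Ē·F̄`, `G = Ḡ`, `H = Ḡ·F̄`, the input satisfies `y 0 = 0` and the
initial states coincide, then the compensator of form (I) and the compensator of
form (II) produce the same output sequence. -/
theorem equivalent_compensator_forms {n p m : ℕ}
    (E Ebar : Matrix (Fin n) (Fin n) ℝ) (F Fbar : Matrix (Fin n) (Fin p) ℝ)
    (G Gbar : Matrix (Fin m) (Fin n) ℝ) (H : Matrix (Fin m) (Fin p) ℝ)
    (hE : E = Ebar) (hF : F = Ebar * Fbar) (hG : G = Gbar) (hH : H = Gbar * Fbar)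
    (y : ℕ → Fin p → ℝ) (hy0 : y 0 = 0)
    (xc ξc : ℕ → Fin n → ℝ) (u₁ u₂ : ℕ → Fin m → ℝ)
    (hxc : ∀ t, xc (t + 1) = E.mulVec (xc t) + F.mulVec (y t))
    (hu₁ : ∀ t, u₁ t = G.mulVec (xc t) + H.mulVec (y t))
    (hξc : ∀ t, ξc (t + 1) = Ebar.mulVec (ξc t) + Fbar.mulVec (y (t + 1)))
    (hu₂ : ∀ t, u₂ t = Gbar.mulVec (ξc t))
    (h0 : xc 0 = ξc 0) :
    ∀ t, u₁ t = u₂ t := by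
  have key : ∀ t, ξc t = xc t + Fbar.mulVec (y t) := by
    intro t
    induction t with
    | zero => simp [hy0, Matrix.mulVec_zero, ← h0]
    | succ t ih =>
        rw [hξc, ih, hxc, hE, hF, Matrix.mulVec_add, Matrix.mulVec_mulVec]
  intro t
  rw [hu₁, hu₂, key, hG, hH, Matrix.mulVec_add, Matrix.mulVec_mulVec]
end

section
/- Let A ∈ ℝ^{n×n}, B ∈ ℝ^{n×m}, C ∈ ℝ^{p×n}. Define 𝒪 = [C; CA; ...; CA^n] ∈ ℝ^{(n+1)p×n}, 𝓕₁ ∈ ℝ^{(n+1)p×nm} the block matrix with (i,k) block C·A^{i−1−k}·B for 0 ≤ k < i ≤ n and zero otherwise, 𝓕₂ = [C·A^n·B, C·A^{n−1}·B, ..., C·A·B] ∈ ℝ^{p×nm}, and 𝓕₃, 𝓕₄ obtained from 𝓕₁, 𝓕₂ by replacing B with the n×n identity. Assume 𝒪ᵀ·𝒪 is invertible and set 𝒪^† = (𝒪ᵀ·𝒪)⁻¹·𝒪ᵀ, 𝒜_u = 𝓕₂ − C·A^{n+1}·𝒪^†·𝓕₁, 𝒜_y = C·A^{n+1}·𝒪^†,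 𝒜_w = 𝓕₄ − C·A^{n+1}·𝒪^†·𝓕₃, 𝒜_v = −C·A^{n+1}·𝒪^†. Let x : ℕ → ℝ^n, u : ℕ → ℝ^m, w : ℕ → ℝ^n, v : ℕ → ℝ^p, y : ℕ → ℝ^p satisfy x(t+1) = A·x(t) + B·u(t) + w(t) and y(t) = C·x(t) + v(t) for all t ≥ 0. Then for every t ≥ n, y(t+1) = 𝒜_u·U(t−1) + 𝒜_y·Y(t) + 𝒜_w·W(t−1) + 𝒜_v·V(t) + C·B·u(t) + C·w(t) + v(t+1), where U(t−1) = [u(t−n); ...; u(t−1)], Y(t) = [y(t−n); ...; y(t)], W(t−1) = [w(t−n); ...; w(t−1)], V(t) = [v(t−n); ...; v(t)]. -/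
open Matrix

private lemma mulVec_finset_sum {m' n' : Type*} [Fintype n'] (A : Matrix m' n' ℝ)
    {ι : Type*} (s : Finset ι) (f : ι → n' → ℝ) :
    A.mulVec (∑ k ∈ s, f k) = ∑ k ∈ s, A.mulVec (f k) := by
  ext j
  simp [Matrix.mulVec, dotProduct, Finset.mul_sum]
  rw [Finset.sum_comm]

private lemma sum_ite_range {M : Type*} [AddCommMonoid M] (f : ℕ → M) {i N : ℕ} (h : i ≤ N) :
    ∑ k ∈ Finset.range N, (if k < i then f k else 0) = ∑ k ∈ Finset.range i, f k := by
  rw [← Finset.sum_subset (Finset.range_subset_range.mpr h)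
      (fun k _ hk' => if_neg (fun hki => hk' (Finset.mem_range.mpr hki)))]
  exact Finset.sum_congr rfl fun k hk => if_pos (Finset.mem_range.mp hk)

/-- **Equivalent dynamics in the behavioral space.**
With `𝒪† = (𝒪ᵀ𝒪)⁻¹𝒪ᵀ` and `𝒜_u, 𝒜_y, 𝒜_w, 𝒜_v` defined as in Lemma (Equivalent
dynamics), the output of the system satisfies, for all `t ≥ n`,
`y(t+1) = 𝒜_u U(t-1) + 𝒜_y Y(t) + 𝒜_w W(t-1) + 𝒜_v V(t) + C B u(t) + C w(t) + v(t+1)`. -/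
theorem behavioral_dynamics {n m p : ℕ}
    (A : Matrix (Fin n) (Fin n) ℝ) (B : Matrix (Fin n) (Fin m) ℝ)
    (C : Matrix (Fin p) (Fin n) ℝ)
    -- 𝒪 = [C; CA; …; CAⁿ]
    (O : Matrix (Fin (n + 1) × Fin p) (Fin n) ℝ)
    (hO : O = Matrix.of fun ia b => (C * A ^ (ia.1 : ℕ)) ia.2 b)
    -- 𝓕₁ : (i,k) block is C A^{i-1-k} B for k < i, zero otherwise
    (F₁ : Matrix (Fin (n + 1) × Fin p) (Fin n × Fin m) ℝ)
    (hF₁ : F₁ = Matrix.of fun ia kb =>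
      if (kb.1 : ℕ) < (ia.1 : ℕ) then (C * A ^ ((ia.1 : ℕ) - 1 - (kb.1 : ℕ)) * B) ia.2 kb.2 else 0)
    -- 𝓕₂ = [C Aⁿ B, C A^{n-1} B, …, C A B]
    (F₂ : Matrix (Fin p) (Fin n × Fin m) ℝ)
    (hF₂ : F₂ = Matrix.of fun a kb => (C * A ^ (n - (kb.1 : ℕ)) * B) a kb.2)
    -- 𝓕₃, 𝓕₄ : obtained from 𝓕₁, 𝓕₂ by replacing B with the identity
    (F₃ : Matrix (Fin (n + 1) × Fin p) (Fin n × Fin n) ℝ)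
    (hF₃ : F₃ = Matrix.of fun ia kb =>
      if (kb.1 : ℕ) < (ia.1 : ℕ) then (C * A ^ ((ia.1 : ℕ) - 1 - (kb.1 : ℕ))) ia.2 kb.2 else 0)
    (F₄ : Matrix (Fin p) (Fin n × Fin n) ℝ)
    (hF₄ : F₄ = Matrix.of fun a kb => (C * A ^ (n - (kb.1 : ℕ))) a kb.2)
    -- observability: 𝒪ᵀ𝒪 invertible, 𝒪† = (𝒪ᵀ𝒪)⁻¹𝒪ᵀ
    (hobs : IsUnit (Oᵀ * O).det)
    (Odag : Matrix (Fin n) (Fin (n + 1) × Fin p) ℝ)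
    (hOdag : Odag = (Oᵀ * O)⁻¹ * Oᵀ)
    (Au : Matrix (Fin p) (Fin n × Fin m) ℝ) (hAu : Au = F₂ - C * A ^ (n + 1) * Odag * F₁)
    (Ay : Matrix (Fin p) (Fin (n + 1) × Fin p) ℝ) (hAy : Ay = C * A ^ (n + 1) * Odag)
    (Aw : Matrix (Fin p) (Fin n × Fin n) ℝ) (hAw : Aw = F₄ - C * A ^ (n + 1) * Odag * F₃)
    (Av : Matrix (Fin p) (Fin (n + 1) × Fin p) ℝ) (hAv : Av = -(C * A ^ (n + 1) * Odag))
    (x : ℕ → Fin n → ℝ) (u : ℕ → Fin m → ℝ) (w : ℕ → Fin n → ℝ)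
    (v y : ℕ → Fin p → ℝ)
    (hx : ∀ t, x (t + 1) = A.mulVec (x t) + B.mulVec (u t) + w t)
    (hy : ∀ t, y t = C.mulVec (x t) + v t) :
    ∀ t, n ≤ t →
      y (t + 1) = Au.mulVec (fun kb : Fin n × Fin m => u (t - n + (kb.1 : ℕ)) kb.2)
        + Ay.mulVec (fun ja : Fin (n + 1) × Fin p => y (t - n + (ja.1 : ℕ)) ja.2)
        + Aw.mulVec (fun kb : Fin n × Fin n => w (t - n + (kb.1 : ℕ)) kb.2)
        + Av.mulVec (fun ja : Fin (n + 1) × Fin p => v (t - n + (ja.1 : ℕ)) ja.2)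
        + (C * B).mulVec (u t) + C.mulVec (w t) + v (t + 1) := by
  intro t ht
  obtain ⟨s, rfl⟩ : ∃ s, t = s + n := ⟨t - n, by omega⟩
  have hsub : s + n - n = s := by omega
  simp only [hsub]
  -- abbreviations
  set Uv : Fin n × Fin m → ℝ := fun kb => u (s + (kb.1 : ℕ)) kb.2 with hUv
  set Wv : Fin n × Fin n → ℝ := fun kb => w (s + (kb.1 : ℕ)) kb.2 with hWv
  set Yv : Fin (n + 1) × Fin p → ℝ := fun ja => y (s + (ja.1 : ℕ)) ja.2 with hYv
  set Vv : Fin (n + 1) × Fin p → ℝ := fun ja => v (s + (ja.1 : ℕ)) ja.2 with hVv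
  set g : ℕ → Fin n → ℝ := fun k => B.mulVec (u (s + k)) + w (s + k) with hg
  have hgdef : ∀ k, g k = B.mulVec (u (s + k)) + w (s + k) := fun _ => rfl
  -- state trajectory
  have hstate : ∀ i : ℕ, x (s + i) = (A ^ i).mulVec (x s)
      + ∑ k ∈ Finset.range i, (A ^ (i - 1 - k)).mulVec (g k) := by
    intro i
    induction i with
    | zero => simp
    | succ i ih =>
      have hsi : s + (i + 1) = (s + i) + 1 := by omega
      rw [hsi, hx, ih, Matrix.mulVec_add, Matrix.mulVec_mulVec, mulVec_finset_sum]
      simp only [Matrix.mulVec_mulVec]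
      rw [Finset.sum_range_succ]
      have h1 : A * A ^ i = A ^ (i + 1) := (pow_succ' A i).symm
      have h2 : ∀ k ∈ Finset.range i,
          (A * A ^ (i - 1 - k)).mulVec (g k) = (A ^ (i + 1 - 1 - k)).mulVec (g k) := by
        intro k hk
        have hk' := Finset.mem_range.mp hk
        have : A * A ^ (i - 1 - k) = A ^ (i + 1 - 1 - k) := by
          rw [← pow_succ']
          congr 1
          omega
        rw [this]
      rw [h1, Finset.sum_congr rfl h2]
      have h3 : i + 1 - 1 - i = 0 := by omega
      rw [h3, pow_zero, Matrix.one_mulVec, hgdef]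
      abel
  -- splitting (C * A^j) *ᵥ g k
  have hgsplit : ∀ (j k : ℕ), (C * A ^ j).mulVec (g k)
      = (C * A ^ j * B).mulVec (u (s + k)) + (C * A ^ j).mulVec (w (s + k)) := by
    intro j k
    rw [hgdef, Matrix.mulVec_add, Matrix.mulVec_mulVec]
  -- applied forms of F₁, F₃
  have hF₁app : ∀ (i : Fin (n + 1)) (a : Fin p), (F₁.mulVec Uv) (i, a)
      = ∑ k ∈ Finset.range i, ((C * A ^ ((i : ℕ) - 1 - k) * B).mulVec (u (s + k))) a := by
    intro i a
    have hile : (i : ℕ) ≤ n := by omega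
    rw [← sum_ite_range (fun k => ((C * A ^ ((i : ℕ) - 1 - k) * B).mulVec (u (s + k))) a) hile,
      ← Fin.sum_univ_eq_sum_range]
    rw [hF₁]
    simp only [Matrix.mulVec, dotProduct, Matrix.of_apply, Fintype.sum_prod_type, hUv]
    refine Finset.sum_congr rfl fun k _ => ?_
    split_ifs with h
    · rfl
    · simp
  have hF₃app : ∀ (i : Fin (n + 1)) (a : Fin p), (F₃.mulVec Wv) (i, a)
      = ∑ k ∈ Finset.range i, ((C * A ^ ((i : ℕ) - 1 - k)).mulVec (w (s + k))) a := by
    intro i a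
    have hile : (i : ℕ) ≤ n := by omega
    rw [← sum_ite_range (fun k => ((C * A ^ ((i : ℕ) - 1 - k)).mulVec (w (s + k))) a) hile,
      ← Fin.sum_univ_eq_sum_range]
    rw [hF₃]
    simp only [Matrix.mulVec, dotProduct, Matrix.of_apply, Fintype.sum_prod_type, hWv]
    refine Finset.sum_congr rfl fun k _ => ?_
    split_ifs with h
    · rfl
    · simp
  have hF₂app : ∀ a : Fin p, (F₂.mulVec Uv) a
      = ∑ k ∈ Finset.range n, ((C * A ^ (n - k) * B).mulVec (u (s + k))) a := by
    intro a
    rw [← Fin.sum_univ_eq_sum_range (fun k => ((C * A ^ (n - k) * B).mulVec (u (s + k))) a)]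
    rw [hF₂]
    simp only [Matrix.mulVec, dotProduct, Matrix.of_apply, Fintype.sum_prod_type, hUv]
  have hF₄app : ∀ a : Fin p, (F₄.mulVec Wv) a
      = ∑ k ∈ Finset.range n, ((C * A ^ (n - k)).mulVec (w (s + k))) a := by
    intro a
    rw [← Fin.sum_univ_eq_sum_range (fun k => ((C * A ^ (n - k)).mulVec (w (s + k))) a)]
    rw [hF₄]
    simp only [Matrix.mulVec, dotProduct, Matrix.of_apply, Fintype.sum_prod_type, hWv]
  -- O applied
  have hOapp : ∀ (i : Fin (n + 1)) (a : Fin p), (O.mulVec (x s)) (i, a)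
      = ((C * A ^ (i : ℕ)).mulVec (x s)) a := by
    intro i a
    rw [hO]
    simp only [Matrix.mulVec, dotProduct, Matrix.of_apply]
  -- key window identity
  have hY : O.mulVec (x s) = Yv - F₁.mulVec Uv - F₃.mulVec Wv - Vv := by
    funext ia
    obtain ⟨i, a⟩ := ia
    have hCx : (C.mulVec (x (s + (i : ℕ)))) a = ((C * A ^ (i : ℕ)).mulVec (x s)) a
        + (∑ k ∈ Finset.range i, ((C * A ^ ((i : ℕ) - 1 - k) * B).mulVec (u (s + k))) a
          + ∑ k ∈ Finset.range i, ((C * A ^ ((i : ℕ) - 1 - k)).mulVec (w (s + k))) a) := by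
      rw [hstate i, Matrix.mulVec_add, Matrix.mulVec_mulVec, mulVec_finset_sum]
      simp only [Matrix.mulVec_mulVec, Pi.add_apply, Finset.sum_apply]
      rw [← Finset.sum_add_distrib]
      congr 1
      refine Finset.sum_congr rfl fun k _ => ?_
      rw [hgsplit]
      simp
    simp only [Pi.sub_apply, hOapp i a, hF₁app i a, hF₃app i a, hYv, hVv]
    rw [hy (s + (i : ℕ)), Pi.add_apply, hCx]
    ring
  -- pseudoinverse identities
  have hOdagO : Odag * O = 1 := by
    rw [hOdag, Matrix.mul_assoc, Matrix.nonsing_inv_mul _ hobs]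
  have hAyO : Ay * O = C * A ^ (n + 1) := by
    rw [hAy, Matrix.mul_assoc, hOdagO, Matrix.mul_one]
  have hCAx : (C * A ^ (n + 1)).mulVec (x s)
      = Ay.mulVec Yv - Ay.mulVec (F₁.mulVec Uv) - Ay.mulVec (F₃.mulVec Wv) - Ay.mulVec Vv := by
    rw [← hAyO, ← Matrix.mulVec_mulVec, hY, Matrix.mulVec_sub, Matrix.mulVec_sub,
      Matrix.mulVec_sub]
  -- middle sum
  have hsum : ∑ k ∈ Finset.range n, (C * A ^ (n - k)).mulVec (g k)
      = F₂.mulVec Uv + F₄.mulVec Wv := by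
    funext a
    simp only [Finset.sum_apply, Pi.add_apply, hF₂app a, hF₄app a]
    rw [← Finset.sum_add_distrib]
    refine Finset.sum_congr rfl fun k _ => ?_
    rw [hgsplit]
    simp
  -- combination lemmas for Au, Aw, Av
  have hAuU : Au.mulVec Uv = F₂.mulVec Uv - Ay.mulVec (F₁.mulVec Uv) := by
    rw [hAu, Matrix.sub_mulVec, ← hAy, Matrix.mulVec_mulVec]
  have hAwW : Aw.mulVec Wv = F₄.mulVec Wv - Ay.mulVec (F₃.mulVec Wv) := by
    rw [hAw, Matrix.sub_mulVec, ← hAy, Matrix.mulVec_mulVec]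
  have hAvV : Av.mulVec Vv = -(Ay.mulVec Vv) := by
    rw [hAv, Matrix.neg_mulVec, ← hAy]
  -- final assembly
  have hx1 := hstate (n + 1)
  rw [← Nat.add_assoc] at hx1
  rw [hy (s + n + 1), hx1, Matrix.mulVec_add, Matrix.mulVec_mulVec, mulVec_finset_sum]
  simp only [Matrix.mulVec_mulVec]
  have hexp : ∀ k ∈ Finset.range (n + 1),
      (C * A ^ (n + 1 - 1 - k)).mulVec (g k) = (C * A ^ (n - k)).mulVec (g k) := by
    intro k hk
    congr 2
  rw [Finset.sum_congr rfl hexp, Finset.sum_range_succ, Nat.sub_self, pow_zero,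
    Matrix.mul_one, hgdef, Matrix.mulVec_add, Matrix.mulVec_mulVec, hsum, hCAx,
    hAuU, hAwW, hAvV]
  abel
end

section
/- Let A ∈ ℝ^{n×n}, B ∈ ℝ^{n×m}, C ∈ ℝ^{p×n}. Define 𝒪 = [C; CA; ...; CA^n], 𝓕₁ the block matrix with (i,k) block C·A^{i−1−k}·B for 0 ≤ k < i ≤ n and zero otherwise, 𝓕₃ obtained from 𝓕₁ by replacing B with the n×n identity, 𝒢₁ = [A^{n−1}·B, A^{n−2}·B, ..., B] ∈ ℝ^{n×nm}, and 𝒢₂ = [A^{n−1}, A^{n−2}, ..., I_n] ∈ ℝ^{n×n·n}. Assume 𝒪ᵀ·𝒪 is invertible and set 𝒪^† = (𝒪ᵀ·𝒪)⁻¹·𝒪ᵀ. Let x : ℕ → ℝ^n, u : ℕ → ℝ^m, w : ℕ → ℝ^n, v : ℕ → ℝ^p, y : ℕ → ℝ^p satisfy x(t+1) = A·x(t) + B·u(t) + w(t) and y(t) = C·x(t) + v(t) for all t ≥ 0. Then for every t ≥ n, x(t) = (𝒢₁ − A^n·𝒪^†·𝓕₁)·U(t−1) + A^n·𝒪^†·Y(t)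 + (𝒢₂ − A^n·𝒪^†·𝓕₃)·W(t−1) − A^n·𝒪^†·V(t), where U(t−1) = [u(t−n); ...; u(t−1)], Y(t) = [y(t−n); ...; y(t)], W(t−1) = [w(t−n); ...; w(t−1)], V(t) = [v(t−n); ...; v(t)]. -/
open Matrix

set_option maxHeartbeats 1000000

lemma state_prop_aux {n m : ℕ} (A : Matrix (Fin n) (Fin n) ℝ) (B : Matrix (Fin n) (Fin m) ℝ)
    (x : ℕ → Fin n → ℝ) (u : ℕ → Fin m → ℝ) (w : ℕ → Fin n → ℝ)
    (hx : ∀ t, x (t + 1) = A.mulVec (x t) + B.mulVec (u t) + w t) (s : ℕ) :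
    ∀ i, x (s + i) = (A ^ i).mulVec (x s)
      + ∑ k ∈ Finset.range i, (A ^ (i - 1 - k)).mulVec (B.mulVec (u (s + k)) + w (s + k)) := by
  intro i
  induction i with
  | zero => simp [Matrix.one_mulVec]
  | succ i ih =>
    have h1 : s + (i + 1) = (s + i) + 1 := by omega
    rw [h1, hx, ih, Matrix.mulVec_add, Matrix.mulVec_mulVec, ← pow_succ']
    have h3 : A.mulVec (∑ k ∈ Finset.range i, (A ^ (i - 1 - k)).mulVec (B.mulVec (u (s + k)) + w (s + k)))
        = ∑ k ∈ Finset.range i, (A ^ (i + 1 - 1 - k)).mulVec (B.mulVec (u (s + k)) + w (s + k))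
        := by
      rw [show A.mulVec = A.mulVecLin from rfl, map_sum]
      refine Finset.sum_congr rfl fun k hk => ?_
      have hk' : k < i := Finset.mem_range.mp hk
      have : A * A ^ (i - 1 - k) = A ^ (i + 1 - 1 - k) := by
        rw [← pow_succ']; congr 1; omega
      simp [Matrix.mulVecLin_apply, Matrix.mulVec_mulVec, this]
    rw [h3, Finset.sum_range_succ]
    have h4 : i + 1 - 1 - i = 0 := by omega
    rw [h4, pow_zero, Matrix.one_mulVec]
    abel

lemma sum_ite_range_aux {i n : ℕ} (hi : i ≤ n) (f : ℕ → ℝ) :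
    ∑ k ∈ Finset.range n, (if k < i then f k else 0) = ∑ k ∈ Finset.range i, f k := by
  rw [← Finset.sum_subset (Finset.range_subset_range.2 hi)
    (fun k _ hk => by simp only [Finset.mem_range, not_lt] at hk; simp [Nat.not_lt.2 hk])]
  exact Finset.sum_congr rfl fun k hk => by simp [Finset.mem_range.mp hk]

lemma mulVec_prod_aux {ι β : Type*} [Fintype ι] [Fintype β] {n : ℕ}
    (M : Matrix ι (Fin n × β) ℝ) (V : Fin n × β → ℝ) (a : ι) :
    (M.mulVec V) a = ∑ k : Fin n, ∑ b : β, M a (k, b) * V (k, b) := by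
  simp [Matrix.mulVec, dotProduct, Fintype.sum_prod_type]


/-- **State reconstruction from the behavioral vector (`x(t) = 𝓗 z(t)`).**
With `𝒪† = (𝒪ᵀ𝒪)⁻¹𝒪ᵀ`, for all `t ≥ n`,
`x(t) = (𝒢₁ - Aⁿ𝒪†𝓕₁) U(t-1) + Aⁿ𝒪† Y(t) + (𝒢₂ - Aⁿ𝒪†𝓕₃) W(t-1) - Aⁿ𝒪† V(t)`. -/
theorem state_from_behavior {n m p : ℕ}
    (A : Matrix (Fin n) (Fin n) ℝ) (B : Matrix (Fin n) (Fin m) ℝ)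
    (C : Matrix (Fin p) (Fin n) ℝ)
    -- 𝒪 = [C; CA; …; CAⁿ]
    (O : Matrix (Fin (n + 1) × Fin p) (Fin n) ℝ)
    (hO : O = Matrix.of fun ia b => (C * A ^ (ia.1 : ℕ)) ia.2 b)
    -- 𝓕₁ : (i,k) block is C A^{i-1-k} B for k < i, zero otherwise
    (F₁ : Matrix (Fin (n + 1) × Fin p) (Fin n × Fin m) ℝ)
    (hF₁ : F₁ = Matrix.of fun ia kb =>
      if (kb.1 : ℕ) < (ia.1 : ℕ) then (C * A ^ ((ia.1 : ℕ) - 1 - (kb.1 : ℕ)) * B) ia.2 kb.2 else 0)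
    -- 𝓕₃ : obtained from 𝓕₁ by replacing B with the identity
    (F₃ : Matrix (Fin (n + 1) × Fin p) (Fin n × Fin n) ℝ)
    (hF₃ : F₃ = Matrix.of fun ia kb =>
      if (kb.1 : ℕ) < (ia.1 : ℕ) then (C * A ^ ((ia.1 : ℕ) - 1 - (kb.1 : ℕ))) ia.2 kb.2 else 0)
    -- 𝒢₁ = [A^{n-1} B, A^{n-2} B, …, B]
    (G₁ : Matrix (Fin n) (Fin n × Fin m) ℝ)
    (hG₁ : G₁ = Matrix.of fun a kb => (A ^ (n - 1 - (kb.1 : ℕ)) * B) a kb.2)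
    -- 𝒢₂ = [A^{n-1}, A^{n-2}, …, Iₙ]
    (G₂ : Matrix (Fin n) (Fin n × Fin n) ℝ)
    (hG₂ : G₂ = Matrix.of fun a kb => (A ^ (n - 1 - (kb.1 : ℕ))) a kb.2)
    -- observability: 𝒪ᵀ𝒪 invertible, 𝒪† = (𝒪ᵀ𝒪)⁻¹𝒪ᵀ
    (hobs : IsUnit (Oᵀ * O).det)
    (Odag : Matrix (Fin n) (Fin (n + 1) × Fin p) ℝ)
    (hOdag : Odag = (Oᵀ * O)⁻¹ * Oᵀ)
    (x : ℕ → Fin n → ℝ) (u : ℕ → Fin m → ℝ) (w : ℕ → Fin n → ℝ)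
    (v y : ℕ → Fin p → ℝ)
    (hx : ∀ t, x (t + 1) = A.mulVec (x t) + B.mulVec (u t) + w t)
    (hy : ∀ t, y t = C.mulVec (x t) + v t) :
    ∀ t, n ≤ t →
      x t = (G₁ - A ^ n * Odag * F₁).mulVec (fun kb : Fin n × Fin m => u (t - n + (kb.1 : ℕ)) kb.2)
        + (A ^ n * Odag).mulVec (fun ja : Fin (n + 1) × Fin p => y (t - n + (ja.1 : ℕ)) ja.2)
        + (G₂ - A ^ n * Odag * F₃).mulVec (fun kb : Fin n × Fin n => w (t - n + (kb.1 : ℕ)) kb.2)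
        - (A ^ n * Odag).mulVec (fun ja : Fin (n + 1) × Fin p => v (t - n + (ja.1 : ℕ)) ja.2) := by
  intro t ht
  obtain ⟨s, rfl⟩ : ∃ s, t = n + s := ⟨t - n, by omega⟩
  have hsn : n + s - n = s := by omega
  simp only [hsn]
  set U : Fin n × Fin m → ℝ := fun kb => u (s + (kb.1 : ℕ)) kb.2 with hU
  set W : Fin n × Fin n → ℝ := fun kb => w (s + (kb.1 : ℕ)) kb.2 with hW
  set Yv : Fin (n + 1) × Fin p → ℝ := fun ja => y (s + (ja.1 : ℕ)) ja.2 with hYv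
  set Vv : Fin (n + 1) × Fin p → ℝ := fun ja => v (s + (ja.1 : ℕ)) ja.2 with hVv
  -- component computations
  have hOc : ∀ i : Fin (n + 1), ∀ a : Fin p,
      (O.mulVec (x s)) (i, a) = ((C * A ^ (i : ℕ)).mulVec (x s)) a := by
    intro i a
    simp [hO, Matrix.mulVec, dotProduct]
  have hF1c : ∀ i : Fin (n + 1), ∀ a : Fin p, (F₁.mulVec U) (i, a)
      = ∑ k ∈ Finset.range (i : ℕ), ((C * A ^ ((i : ℕ) - 1 - k) * B).mulVec (u (s + k))) a := by
    intro i a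
    have hi : (i : ℕ) ≤ n := Nat.lt_succ_iff.mp i.isLt
    rw [mulVec_prod_aux]
    calc ∑ k : Fin n, ∑ b, F₁ (i, a) (k, b) * U (k, b)
        = ∑ k : Fin n, (fun k : ℕ =>
            if k < (i : ℕ) then ((C * A ^ ((i : ℕ) - 1 - k) * B).mulVec (u (s + k))) a else 0)
            (k : ℕ) := by
          refine Finset.sum_congr rfl fun k _ => ?_
          by_cases hk : (k : ℕ) < (i : ℕ)
          · simp [hF₁, hk, Matrix.mulVec, dotProduct, hU]
          · simp [hF₁, hk, hU]
      _ = ∑ k ∈ Finset.range n, (fun k : ℕ =>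
            if k < (i : ℕ) then ((C * A ^ ((i : ℕ) - 1 - k) * B).mulVec (u (s + k))) a else 0)
            k := Fin.sum_univ_eq_sum_range (fun k : ℕ =>
            if k < (i : ℕ) then ((C * A ^ ((i : ℕ) - 1 - k) * B).mulVec (u (s + k))) a else 0) n
      _ = _ := sum_ite_range_aux hi _
  have hF3c : ∀ i : Fin (n + 1), ∀ a : Fin p, (F₃.mulVec W) (i, a)
      = ∑ k ∈ Finset.range (i : ℕ), ((C * A ^ ((i : ℕ) - 1 - k)).mulVec (w (s + k))) a := by
    intro i a
    have hi : (i : ℕ) ≤ n := Nat.lt_succ_iff.mp i.isLt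
    rw [mulVec_prod_aux]
    calc ∑ k : Fin n, ∑ b, F₃ (i, a) (k, b) * W (k, b)
        = ∑ k : Fin n, (fun k : ℕ =>
            if k < (i : ℕ) then ((C * A ^ ((i : ℕ) - 1 - k)).mulVec (w (s + k))) a else 0)
            (k : ℕ) := by
          refine Finset.sum_congr rfl fun k _ => ?_
          by_cases hk : (k : ℕ) < (i : ℕ)
          · simp [hF₃, hk, Matrix.mulVec, dotProduct, hW]
          · simp [hF₃, hk, hW]
      _ = ∑ k ∈ Finset.range n, (fun k : ℕ =>
            if k < (i : ℕ) then ((C * A ^ ((i : ℕ) - 1 - k)).mulVec (w (s + k))) a else 0)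
            k := Fin.sum_univ_eq_sum_range (fun k : ℕ =>
            if k < (i : ℕ) then ((C * A ^ ((i : ℕ) - 1 - k)).mulVec (w (s + k))) a else 0) n
      _ = _ := sum_ite_range_aux hi _
  have hG1c : ∀ a : Fin n, (G₁.mulVec U) a
      = ∑ k ∈ Finset.range n, ((A ^ (n - 1 - k) * B).mulVec (u (s + k))) a := by
    intro a
    rw [mulVec_prod_aux]
    calc ∑ k : Fin n, ∑ b, G₁ a (k, b) * U (k, b)
        = ∑ k : Fin n, (fun k : ℕ => ((A ^ (n - 1 - k) * B).mulVec (u (s + k))) a) (k : ℕ) := by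
          refine Finset.sum_congr rfl fun k _ => ?_
          simp [hG₁, Matrix.mulVec, dotProduct, hU]
      _ = _ := Fin.sum_univ_eq_sum_range
            (fun k : ℕ => ((A ^ (n - 1 - k) * B).mulVec (u (s + k))) a) n
  have hG2c : ∀ a : Fin n, (G₂.mulVec W) a
      = ∑ k ∈ Finset.range n, ((A ^ (n - 1 - k)).mulVec (w (s + k))) a := by
    intro a
    rw [mulVec_prod_aux]
    calc ∑ k : Fin n, ∑ b, G₂ a (k, b) * W (k, b)
        = ∑ k : Fin n, (fun k : ℕ => ((A ^ (n - 1 - k)).mulVec (w (s + k))) a) (k : ℕ) := by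
          refine Finset.sum_congr rfl fun k _ => ?_
          simp [hG₂, Matrix.mulVec, dotProduct, hW]
      _ = _ := Fin.sum_univ_eq_sum_range
            (fun k : ℕ => ((A ^ (n - 1 - k)).mulVec (w (s + k))) a) n
  -- stacked output equation
  have hYeq : Yv = O.mulVec (x s) + F₁.mulVec U + F₃.mulVec W + Vv := by
    funext ja
    obtain ⟨i, a⟩ := ja
    simp only [Pi.add_apply]
    rw [hOc, hF1c, hF3c]
    show y (s + (i : ℕ)) a = _
    rw [hy, state_prop_aux A B x u w hx s (i : ℕ)]
    simp only [Pi.add_apply, Matrix.mulVec_add, Matrix.mulVec_mulVec]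
    rw [show C.mulVec = C.mulVecLin from rfl, map_sum]
    simp only [Matrix.mulVecLin_apply, Matrix.mulVec_mulVec, Finset.sum_apply,
      Matrix.mulVec_add, Pi.add_apply]
    rw [Finset.sum_add_distrib]
    show _ = _ + _ + _ + v (s + (i : ℕ)) a
    ring_nf
    simp only [Matrix.mulVec_mulVec, Matrix.mul_assoc]
    ring
  have hOdagO : Odag * O = 1 := by
    rw [hOdag, Matrix.mul_assoc, Matrix.nonsing_inv_mul _ hobs]
  have hxs : x s = Odag.mulVec Yv - (Odag * F₁).mulVec U - (Odag * F₃).mulVec W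
      - Odag.mulVec Vv := by
    have h := congrArg (fun z => Odag.mulVec z) hYeq
    simp only [Matrix.mulVec_add, Matrix.mulVec_mulVec, hOdagO, Matrix.one_mulVec] at h
    rw [h]; abel
  have hxfin : x (s + n) = (A ^ n).mulVec (x s) + G₁.mulVec U + G₂.mulVec W := by
    rw [state_prop_aux A B x u w hx s n, add_assoc]
    congr 1
    funext a
    simp only [Finset.sum_apply, Pi.add_apply]
    rw [hG1c, hG2c, ← Finset.sum_add_distrib]
    refine Finset.sum_congr rfl fun k _ => ?_
    rw [Matrix.mulVec_add, Matrix.mulVec_mulVec]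
    simp
  rw [show n + s = s + n from Nat.add_comm n s, hxfin, hxs]
  simp only [Matrix.sub_mulVec, Matrix.mulVec_sub, Matrix.mulVec_mulVec, Matrix.mul_assoc]
  abel
end

section
/- Let E ∈ ℝ^{n×n}, F ∈ ℝ^{n×p}, G ∈ ℝ^{m×n}, H ∈ ℝ^{m×p}. Define 𝒯₁ = [G; G·E; ...; G·E^{n−1}] ∈ ℝ^{nm×n}, 𝒯₂ = [G·E^{n−1}·F, ..., G·F, H] ∈ ℝ^{m×(n+1)p}, and 𝓜 ∈ ℝ^{nm×(n+1)p} the block matrix whose (i,j) block (for i ∈ {0,...,n−1}, j ∈ {0,...,n}) equals H if j = i, equals G·E^{i−1−j}·F if j < i, and is zero otherwise. Assume 𝒯₁ᵀ·𝒯₁ is invertible and set 𝒯₁^† = (𝒯₁ᵀ·𝒯₁)⁻¹·𝒯₁ᵀ. Let y : ℕ → ℝ^p and x_c : ℕ → ℝ^n, u : ℕ → ℝ^m satisfy x_c(t+1) = E·x_c(t) + F·y(t) and u(t) = G·x_c(t) + H·y(t) for all t ≥ 0. Then for every t ≥ n, u(t) = G·E^n·𝒯₁^†·U(t−1) + (𝒯₂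 − G·E^n·𝒯₁^†·𝓜)·Y(t), where U(t−1) = [u(t−n); ...; u(t−1)] and Y(t) = [y(t−n); ...; y(t)]. -/
open Matrix

private lemma mulVec_sum' {α β ι : Type*} [Fintype β] (A : Matrix α β ℝ) (s : Finset ι)
    (f : ι → β → ℝ) : A.mulVec (∑ j ∈ s, f j) = ∑ j ∈ s, A.mulVec (f j) := by
  funext a
  simp only [Matrix.mulVec, dotProduct, Finset.sum_apply, Finset.mul_sum]
  rw [Finset.sum_comm]

/-- **From dynamic to static controllers.**
With `𝒯₁ = [G; GE; …; GE^{n-1}]`, `𝒯₂ = [GE^{n-1}F, …, GF, H]`, `𝓜` the block matrix with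
`(i,j)` block `H` if `j = i`, `G E^{i-1-j} F` if `j < i`, zero otherwise, and
`𝒯₁† = (𝒯₁ᵀ𝒯₁)⁻¹𝒯₁ᵀ`, every output of the dynamic compensator satisfies, for `t ≥ n`,
`u(t) = G Eⁿ 𝒯₁† U(t-1) + (𝒯₂ - G Eⁿ 𝒯₁† 𝓜) Y(t)`. -/
theorem dynamic_to_static_controller {n p m : ℕ}
    (E : Matrix (Fin n) (Fin n) ℝ) (F : Matrix (Fin n) (Fin p) ℝ)
    (G : Matrix (Fin m) (Fin n) ℝ) (H : Matrix (Fin m) (Fin p) ℝ)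
    -- 𝒯₁ = [G; GE; …; GE^{n-1}]
    (T₁ : Matrix (Fin n × Fin m) (Fin n) ℝ)
    (hT₁ : T₁ = Matrix.of fun ia b => (G * E ^ (ia.1 : ℕ)) ia.2 b)
    -- 𝒯₂ = [GE^{n-1}F, …, GF, H]
    (T₂ : Matrix (Fin m) (Fin (n + 1) × Fin p) ℝ)
    (hT₂ : T₂ = Matrix.of fun a jb =>
      if (jb.1 : ℕ) = n then H a jb.2 else (G * E ^ (n - 1 - (jb.1 : ℕ)) * F) a jb.2)
    -- 𝓜 : (i,j) block is H if j = i, G E^{i-1-j} F if j < i, zero otherwise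
    (Mc : Matrix (Fin n × Fin m) (Fin (n + 1) × Fin p) ℝ)
    (hMc : Mc = Matrix.of fun ia jb =>
      if (jb.1 : ℕ) = (ia.1 : ℕ) then H ia.2 jb.2
      else if (jb.1 : ℕ) < (ia.1 : ℕ) then (G * E ^ ((ia.1 : ℕ) - 1 - (jb.1 : ℕ)) * F) ia.2 jb.2
      else 0)
    -- 𝒯₁ᵀ𝒯₁ invertible, 𝒯₁† = (𝒯₁ᵀ𝒯₁)⁻¹𝒯₁ᵀ
    (hinv : IsUnit (T₁ᵀ * T₁).det)
    (T₁dag : Matrix (Fin n) (Fin n × Fin m) ℝ)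
    (hT₁dag : T₁dag = (T₁ᵀ * T₁)⁻¹ * T₁ᵀ)
    (y : ℕ → Fin p → ℝ) (xc : ℕ → Fin n → ℝ) (u : ℕ → Fin m → ℝ)
    (hxc : ∀ t, xc (t + 1) = E.mulVec (xc t) + F.mulVec (y t))
    (hu : ∀ t, u t = G.mulVec (xc t) + H.mulVec (y t)) :
    ∀ t, n ≤ t →
      u t = (G * E ^ n * T₁dag).mulVec (fun ib : Fin n × Fin m => u (t - n + (ib.1 : ℕ)) ib.2)
        + (T₂ - G * E ^ n * T₁dag * Mc).mulVec
            (fun jb : Fin (n + 1) × Fin p => y (t - n + (jb.1 : ℕ)) jb.2) := by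
  intro t ht
  set s := t - n with hs
  have hts : t = s + n := by omega
  -- state evolution
  have hstate : ∀ k, xc (s + k) = (E ^ k).mulVec (xc s)
      + ∑ j ∈ Finset.range k, (E ^ (k - 1 - j) * F).mulVec (y (s + j)) := by
    intro k
    induction k with
    | zero => simp [Matrix.one_mulVec]
    | succ k ih =>
      have h1 : s + (k + 1) = (s + k) + 1 := by omega
      rw [h1, hxc, ih, Matrix.mulVec_add, Finset.sum_range_succ]
      have hsum : E.mulVec (∑ j ∈ Finset.range k, (E ^ (k - 1 - j) * F).mulVec (y (s + j)))
          = ∑ j ∈ Finset.range k, (E ^ (k + 1 - 1 - j) * F).mulVec (y (s + j)) := by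
        rw [mulVec_sum']
        refine Finset.sum_congr rfl fun j hj => ?_
        rw [Matrix.mulVec_mulVec]
        have hj' : j < k := Finset.mem_range.mp hj
        have h2 : k + 1 - 1 - j = (k - 1 - j) + 1 := by omega
        rw [h2, pow_succ', Matrix.mul_assoc]
      rw [hsum, Matrix.mulVec_mulVec, ← pow_succ']
      have h3 : (E ^ (k + 1 - 1 - k) * F).mulVec (y (s + k)) = F.mulVec (y (s + k)) := by
        simp
      rw [h3]
      abel
  -- output formula
  have hui : ∀ i : ℕ, u (s + i) = (G * E ^ i).mulVec (xc s)
      + ((∑ j ∈ Finset.range i, (G * E ^ (i - 1 - j) * F).mulVec (y (s + j)))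
          + H.mulVec (y (s + i))) := by
    intro i
    rw [hu, hstate, Matrix.mulVec_add, Matrix.mulVec_mulVec, mulVec_sum']
    have : ∀ j, G.mulVec ((E ^ (i - 1 - j) * F).mulVec (y (s + j)))
        = (G * E ^ (i - 1 - j) * F).mulVec (y (s + j)) := by
      intro j; rw [Matrix.mulVec_mulVec, Matrix.mul_assoc]
    simp_rw [this]
    abel
  set Yv : Fin (n + 1) × Fin p → ℝ := fun jb => y (s + (jb.1 : ℕ)) jb.2 with hYv
  -- claim A : U-vector = T₁ xc(s) + Mc Yv
  have claimA : (fun ib : Fin n × Fin m => u (s + (ib.1 : ℕ)) ib.2)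
      = T₁.mulVec (xc s) + Mc.mulVec Yv := by
    funext ib
    obtain ⟨i, a⟩ := ib
    have hi : (i : ℕ) < n := i.isLt
    have h1 : (T₁.mulVec (xc s)) (i, a) = ((G * E ^ (i : ℕ)).mulVec (xc s)) a := by
      simp [hT₁, Matrix.mulVec, dotProduct]
    have h2 : (Mc.mulVec Yv) (i, a)
        = ∑ j ∈ Finset.range (n + 1),
            (if j = (i : ℕ) then (H.mulVec (y (s + j))) a
             else if j < (i : ℕ) then ((G * E ^ ((i : ℕ) - 1 - j) * F).mulVec (y (s + j))) a
             else 0) := by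
      rw [show (Mc.mulVec Yv) (i, a) = ∑ jb : Fin (n+1) × Fin p, Mc (i, a) jb * Yv jb from rfl]
      rw [Fintype.sum_prod_type]
      rw [← Fin.sum_univ_eq_sum_range (fun j =>
        (if j = (i : ℕ) then (H.mulVec (y (s + j))) a
         else if j < (i : ℕ) then ((G * E ^ ((i : ℕ) - 1 - j) * F).mulVec (y (s + j))) a
         else 0)) (n + 1)]
      refine Finset.sum_congr rfl fun j _ => ?_
      simp only [hMc, Matrix.of_apply, hYv]
      split_ifs with hc1 hc2 <;>
        simp [Matrix.mulVec, dotProduct]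
    have h3 : ∑ j ∈ Finset.range (n + 1),
            (if j = (i : ℕ) then (H.mulVec (y (s + j))) a
             else if j < (i : ℕ) then ((G * E ^ ((i : ℕ) - 1 - j) * F).mulVec (y (s + j))) a
             else 0)
        = (∑ j ∈ Finset.range (i : ℕ), ((G * E ^ ((i : ℕ) - 1 - j) * F).mulVec (y (s + j))) a)
          + (H.mulVec (y (s + (i : ℕ)))) a := by
      rw [Finset.range_eq_Ico,
        ← Finset.sum_Ico_consecutive _ (Nat.zero_le ((i : ℕ) + 1)) (by omega)]
      have hz : ∑ j ∈ Finset.Ico ((i : ℕ) + 1) (n + 1),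
          (if j = (i : ℕ) then (H.mulVec (y (s + j))) a
           else if j < (i : ℕ) then ((G * E ^ ((i : ℕ) - 1 - j) * F).mulVec (y (s + j))) a
           else 0) = 0 := by
        refine Finset.sum_eq_zero fun j hj => ?_
        have := Finset.mem_Ico.mp hj
        rw [if_neg (by omega), if_neg (by omega)]
      rw [hz, add_zero, ← Finset.range_eq_Ico, Finset.sum_range_succ, if_pos rfl]
      congr 1
      refine Finset.sum_congr rfl fun j hj => ?_
      have hj' : j < (i : ℕ) := Finset.mem_range.mp hj
      rw [if_neg (by omega), if_pos hj']
    show u (s + (i : ℕ)) a = (T₁.mulVec (xc s) + Mc.mulVec Yv) (i, a)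
    rw [hui (i : ℕ)]
    simp only [Pi.add_apply, Finset.sum_apply]
    rw [h1, h2, h3]
  -- claim B : u(s+n) = G Eⁿ xc(s) + T₂ Yv
  have claimB : u (s + n) = (G * E ^ n).mulVec (xc s) + T₂.mulVec Yv := by
    funext a
    have h2 : (T₂.mulVec Yv) a
        = ∑ j ∈ Finset.range (n + 1),
            (if j = n then (H.mulVec (y (s + j))) a
             else ((G * E ^ (n - 1 - j) * F).mulVec (y (s + j))) a) := by
      rw [show (T₂.mulVec Yv) a = ∑ jb : Fin (n+1) × Fin p, T₂ a jb * Yv jb from rfl]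
      rw [Fintype.sum_prod_type]
      rw [← Fin.sum_univ_eq_sum_range (fun j =>
        (if j = n then (H.mulVec (y (s + j))) a
         else ((G * E ^ (n - 1 - j) * F).mulVec (y (s + j))) a)) (n + 1)]
      refine Finset.sum_congr rfl fun j _ => ?_
      simp only [hT₂, Matrix.of_apply, hYv]
      split_ifs with hc1 <;> simp [Matrix.mulVec, dotProduct]
    have h3 : ∑ j ∈ Finset.range (n + 1),
            (if j = n then (H.mulVec (y (s + j))) a
             else ((G * E ^ (n - 1 - j) * F).mulVec (y (s + j))) a)
        = (∑ j ∈ Finset.range n, ((G * E ^ (n - 1 - j) * F).mulVec (y (s + j))) a)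
          + (H.mulVec (y (s + n))) a := by
      rw [Finset.sum_range_succ, if_pos rfl]
      congr 1
      refine Finset.sum_congr rfl fun j hj => ?_
      have hj' : j < n := Finset.mem_range.mp hj
      rw [if_neg (by omega)]
    rw [hui n]
    simp only [Pi.add_apply, Finset.sum_apply]
    rw [h2, h3]
  -- pseudoinverse identity
  have hdag : T₁dag * T₁ = 1 := by
    rw [hT₁dag, Matrix.mul_assoc]
    exact Matrix.nonsing_inv_mul _ hinv
  -- assemble
  rw [hts, claimB, claimA, Matrix.mulVec_add, Matrix.mulVec_mulVec, Matrix.mulVec_mulVec,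
    Matrix.mul_assoc (G * E ^ n) T₁dag T₁, hdag, Matrix.mul_one, Matrix.sub_mulVec]
  abel
end

section
/- Let n ≥ 1 and let E ∈ ℝ^{n_c×n_c}, F ∈ ℝ^{n_c×p}, G ∈ ℝ^{m×n_c}, H ∈ ℝ^{m×p}, F̄ ∈ ℝ^{n_c×p} satisfy F = E·F̄ and H = G·F̄. Assume the matrix Σ_{i=0}^{n−1} (E^i)ᵀ·Gᵀ·G·E^i is invertible, and let S denote its inverse. Then G·E^{n−1}·F = G·E^{n}·S·( Gᵀ·H + Σ_{i=1}^{n−1} (E^i)ᵀ·Gᵀ·G·E^{i−1}·F ). -/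
open Matrix

/-- **Algebraic core of the sparsity of the optimal behavioral LQG gain (`𝒦₂ = 0`).**
If `F = E F̄`, `H = G F̄`, and `S` is the inverse of `∑_{i=0}^{n-1} (Eⁱ)ᵀ Gᵀ G Eⁱ`, then
`G E^{n-1} F = G Eⁿ S (Gᵀ H + ∑_{i=1}^{n-1} (Eⁱ)ᵀ Gᵀ G E^{i-1} F)`. -/
theorem lqg_gain_sparsity_core {n nc p m : ℕ} (hn : 1 ≤ n)
    (E : Matrix (Fin nc) (Fin nc) ℝ) (F Fbar : Matrix (Fin nc) (Fin p) ℝ)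
    (G : Matrix (Fin m) (Fin nc) ℝ) (H : Matrix (Fin m) (Fin p) ℝ)
    (hF : F = E * Fbar) (hH : H = G * Fbar)
    (hinv : IsUnit (∑ i ∈ Finset.range n, (E ^ i)ᵀ * Gᵀ * G * E ^ i).det)
    (S : Matrix (Fin nc) (Fin nc) ℝ)
    (hS : S = (∑ i ∈ Finset.range n, (E ^ i)ᵀ * Gᵀ * G * E ^ i)⁻¹) :
    G * E ^ (n - 1) * F
      = G * E ^ n * S * (Gᵀ * H + ∑ i ∈ Finset.Icc 1 (n - 1), (E ^ i)ᵀ * Gᵀ * G * E ^ (i - 1) * F) := by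
  set M := ∑ i ∈ Finset.range n, (E ^ i)ᵀ * Gᵀ * G * E ^ i with hM
  have hbracket :
      Gᵀ * H + ∑ i ∈ Finset.Icc 1 (n - 1), (E ^ i)ᵀ * Gᵀ * G * E ^ (i - 1) * F
        = M * Fbar := by
    have hrange : Finset.range n = insert 0 (Finset.Icc 1 (n - 1)) := by
      ext k
      simp only [Finset.mem_range, Finset.mem_insert, Finset.mem_Icc]
      omega
    rw [hM, Matrix.sum_mul, hrange, Finset.sum_insert (by simp)]
    congr 1
    · simp [hH, Matrix.mul_assoc]
    · refine Finset.sum_congr rfl fun i hi => ?_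
      have hi1 : 1 ≤ i := (Finset.mem_Icc.mp hi).1
      have he : E ^ (i - 1) * E = E ^ i := by
        rw [← pow_succ]
        congr 1
        omega
      rw [hF, ← Matrix.mul_assoc,
        Matrix.mul_assoc ((E ^ i)ᵀ * Gᵀ * G) (E ^ (i - 1)) E, he]
  have hSM : S * M = 1 := by
    rw [hS, hM]
    exact Matrix.nonsing_inv_mul _ hinv
  have hpow : E ^ n = E ^ (n - 1) * E := by
    rw [← pow_succ]
    congr 1
    omega
  rw [hbracket, ← Matrix.mul_assoc, Matrix.mul_assoc (G * E ^ n) S M, hSM,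
    Matrix.mul_one, hF, hpow]
  simp [Matrix.mul_assoc]
end

section
/- Let 𝒜_c, P, dP, X, M, Q_K be real N×N matrices and let B_u ∈ ℝ^{N×m}, C_z ∈ ℝ^{q×N}, dK ∈ ℝ^{m×q}. Assume P, M, Q_K are symmetric, M = 𝒜_cᵀ·M·𝒜_c + Q_K, X = (B_u·dK·C_z)·P·𝒜_cᵀ + 𝒜_c·P·(B_u·dK·C_z)ᵀ, and dP = 𝒜_c·dP·𝒜_cᵀ + X. Then trace(Q_K·dP) = 2·trace(C_z·P·𝒜_cᵀ·M·B_u·dK). -/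
open Matrix

/-- **Trace identity for the differential of the covariance.**
If `M = 𝒜_cᵀ M 𝒜_c + Q_K`, `X = (B_u dK C_z) P 𝒜_cᵀ + 𝒜_c P (B_u dK C_z)ᵀ`, and
`dP = 𝒜_c dP 𝒜_cᵀ + X`, then `trace (Q_K dP) = 2 trace (C_z P 𝒜_cᵀ M B_u dK)`. -/
theorem trace_QK_dP {N m q : ℕ}
    (Ac P dP X M QK : Matrix (Fin N) (Fin N) ℝ)
    (Bu : Matrix (Fin N) (Fin m) ℝ) (Cz : Matrix (Fin q) (Fin N) ℝ)
    (dK : Matrix (Fin m) (Fin q) ℝ)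
    (hP : Pᵀ = P) (hM : Mᵀ = M) (hQK : QKᵀ = QK)
    (hMeq : M = Acᵀ * M * Ac + QK)
    (hX : X = (Bu * dK * Cz) * P * Acᵀ + Ac * P * (Bu * dK * Cz)ᵀ)
    (hdP : dP = Ac * dP * Acᵀ + X) :
    (QK * dP).trace = 2 * (Cz * P * Acᵀ * M * Bu * dK).trace := by
  have hQ : QK = M - Acᵀ * M * Ac := eq_sub_of_add_eq' hMeq.symm
  have hXe : X = dP - Ac * dP * Acᵀ := eq_sub_of_add_eq' hdP.symm
  have key : (QK * dP).trace = (M * X).trace := by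
    rw [hQ, hXe, sub_mul, mul_sub, trace_sub, trace_sub]
    congr 1
    calc (Acᵀ * M * Ac * dP).trace
        = (Acᵀ * (M * Ac * dP)).trace := by simp only [Matrix.mul_assoc]
      _ = ((M * Ac * dP) * Acᵀ).trace := trace_mul_comm _ _
      _ = (M * (Ac * dP * Acᵀ)).trace := by simp only [Matrix.mul_assoc]
  have h1 : (M * ((Bu * dK * Cz) * P * Acᵀ)).trace
      = (Cz * P * Acᵀ * M * Bu * dK).trace := by
    calc (M * ((Bu * dK * Cz) * P * Acᵀ)).trace
        = ((Bu * dK) * (Cz * (P * (Acᵀ * M)))).trace := by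
          rw [trace_mul_comm]; simp only [Matrix.mul_assoc]
      _ = ((Cz * (P * (Acᵀ * M))) * (Bu * dK)).trace := trace_mul_comm _ _
      _ = (Cz * P * Acᵀ * M * Bu * dK).trace := by simp only [Matrix.mul_assoc]
  have h2 : (M * (Ac * P * (Bu * dK * Cz)ᵀ)).trace
      = (Cz * P * Acᵀ * M * Bu * dK).trace := by
    have ht := trace_transpose (M * (Ac * P * (Bu * dK * Cz)ᵀ))
    rw [← ht, transpose_mul, transpose_mul, transpose_transpose,
      transpose_mul, hM, hP]
    calc (Bu * dK * Cz * (P * Acᵀ) * M).trace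
        = ((Bu * dK) * (Cz * (P * (Acᵀ * M)))).trace := by
          simp only [Matrix.mul_assoc]
      _ = ((Cz * (P * (Acᵀ * M))) * (Bu * dK)).trace := trace_mul_comm _ _
      _ = (Cz * P * Acᵀ * M * Bu * dK).trace := by
          simp only [Matrix.mul_assoc]
  rw [key, hX, mul_add, trace_add, h1, h2]
  ring
end

section
/- Let 𝒜, P, dP, M, Q_z be real N×N matrices, B_u ∈ ℝ^{N×m}, C_z ∈ ℝ^{q×N}, K, dK ∈ ℝ^{m×q}, and R_u ∈ ℝ^{m×m}. Assume P, M, Q_z, R_u are symmetric, and set 𝒜_c = 𝒜 + B_u·K·C_z and Q_K = Q_z + C_zᵀ·Kᵀ·R_u·K·C_z. Assume M = 𝒜_cᵀ·M·𝒜_c + Q_K, and dP = 𝒜_c·dP·𝒜_cᵀ + (B_u·dK·C_z)·P·𝒜_cᵀ + 𝒜_c·P·(B_u·dK·C_z)ᵀ. Then trace((C_zᵀ·dKᵀ·R_u·K·C_z + C_zᵀ·Kᵀ·R_u·dK·C_z)·P) + trace(Q_K·dP) = 2·trace((C_z·P·C_zᵀ·Kᵀ·R_u + C_z·P·𝒜_cᵀ·M·B_u)·dK).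 -/
open Matrix

/-- Rotate a trace of a product: cycle the first factor to the end. -/
private theorem trace_rot {α β : Type*} [Fintype α] [Fintype β]
    (X : Matrix α β ℝ) (Y : Matrix β α ℝ) :
    (X * Y).trace = (Y * X).trace := Matrix.trace_mul_comm X Y

/-- **Gradient formula for the behavioral LQG cost.**
With `𝒜_c = 𝒜 + B_u K C_z`, `Q_K = Q_z + C_zᵀ Kᵀ R_u K C_z`, `M = 𝒜_cᵀ M 𝒜_c + Q_K`, and
`dP = 𝒜_c dP 𝒜_cᵀ + (B_u dK C_z) P 𝒜_cᵀ + 𝒜_c P (B_u dK C_z)ᵀ`, the differential of the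
cost satisfies
`trace((C_zᵀ dKᵀ R_u K C_z + C_zᵀ Kᵀ R_u dK C_z) P) + trace(Q_K dP)
  = 2 trace((C_z P C_zᵀ Kᵀ R_u + C_z P 𝒜_cᵀ M B_u) dK)`. -/
theorem lqg_cost_gradient_formula {N m q : ℕ}
    (A P dP M Qz : Matrix (Fin N) (Fin N) ℝ)
    (Bu : Matrix (Fin N) (Fin m) ℝ) (Cz : Matrix (Fin q) (Fin N) ℝ)
    (K dK : Matrix (Fin m) (Fin q) ℝ) (Ru : Matrix (Fin m) (Fin m) ℝ)
    (hP : Pᵀ = P) (hM : Mᵀ = M) (hQz : Qzᵀ = Qz) (hRu : Ruᵀ = Ru)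
    (Ac : Matrix (Fin N) (Fin N) ℝ) (hAc : Ac = A + Bu * K * Cz)
    (QK : Matrix (Fin N) (Fin N) ℝ) (hQK : QK = Qz + Czᵀ * Kᵀ * Ru * K * Cz)
    (hMeq : M = Acᵀ * M * Ac + QK)
    (hdP : dP = Ac * dP * Acᵀ + (Bu * dK * Cz) * P * Acᵀ + Ac * P * (Bu * dK * Cz)ᵀ) :
    ((Czᵀ * dKᵀ * Ru * K * Cz + Czᵀ * Kᵀ * Ru * dK * Cz) * P).trace + (QK * dP).trace
      = 2 * ((Cz * P * Czᵀ * Kᵀ * Ru + Cz * P * Acᵀ * M * Bu) * dK).trace := by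
  -- normal forms: t1 with dK first, fully right-associated
  have e1 : (Czᵀ * dKᵀ * Ru * K * Cz * P).trace
      = (dK * (Cz * (P * (Czᵀ * (Kᵀ * Ru))))).trace := by
    rw [← Matrix.trace_transpose (Czᵀ * dKᵀ * Ru * K * Cz * P)]
    simp only [Matrix.transpose_mul, Matrix.transpose_transpose, hP, hRu, Matrix.mul_assoc]
    rw [trace_rot]; simp only [Matrix.mul_assoc]
    rw [trace_rot]; simp only [Matrix.mul_assoc]
    rw [trace_rot]; simp only [Matrix.mul_assoc]
    rw [trace_rot]; simp only [Matrix.mul_assoc]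
  have e2 : (Czᵀ * Kᵀ * Ru * dK * Cz * P).trace
      = (dK * (Cz * (P * (Czᵀ * (Kᵀ * Ru))))).trace := by
    simp only [Matrix.mul_assoc]
    rw [trace_rot]; simp only [Matrix.mul_assoc]
    rw [trace_rot]; simp only [Matrix.mul_assoc]
    rw [trace_rot]; simp only [Matrix.mul_assoc]
  -- QK = M - AcᵀMAc
  have hQK' : QK = M - Acᵀ * M * Ac := (sub_eq_of_eq_add' hMeq).symm
  have hD : dP - Ac * dP * Acᵀ
      = Bu * dK * Cz * P * Acᵀ + Ac * P * (Bu * dK * Cz)ᵀ :=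
    sub_eq_of_eq_add' (hdP.trans (add_assoc _ _ _))
  have e3 : (QK * dP).trace = 2 * (dK * (Cz * (P * (Acᵀ * (M * Bu))))).trace := by
    rw [hQK', Matrix.sub_mul, Matrix.trace_sub]
    have h4 : (Acᵀ * M * Ac * dP).trace = (M * (Ac * dP * Acᵀ)).trace := by
      simp only [Matrix.mul_assoc]
      rw [trace_rot]; simp only [Matrix.mul_assoc]
    rw [h4, ← Matrix.trace_sub, ← Matrix.mul_sub, hD, Matrix.mul_add, Matrix.trace_add]
    have h6 : (M * (Bu * dK * Cz * P * Acᵀ)).trace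
        = (dK * (Cz * (P * (Acᵀ * (M * Bu))))).trace := by
      simp only [Matrix.mul_assoc]
      rw [trace_rot]; simp only [Matrix.mul_assoc]
      rw [trace_rot]; simp only [Matrix.mul_assoc]
    have h7 : (M * (Ac * P * (Bu * dK * Cz)ᵀ)).trace
        = (dK * (Cz * (P * (Acᵀ * (M * Bu))))).trace := by
      rw [← Matrix.trace_transpose (M * (Ac * P * (Bu * dK * Cz)ᵀ))]
      simp only [Matrix.transpose_mul, Matrix.transpose_transpose, hP, hM, Matrix.mul_assoc]
      rw [trace_rot]; simp only [Matrix.mul_assoc]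
    rw [h6, h7]; ring
  -- RHS terms
  have e4 : (Cz * P * Czᵀ * Kᵀ * Ru * dK).trace
      = (dK * (Cz * (P * (Czᵀ * (Kᵀ * Ru))))).trace := by
    simp only [Matrix.mul_assoc]; symm
    rw [trace_rot]; simp only [Matrix.mul_assoc]
  have e5 : (Cz * P * Acᵀ * M * Bu * dK).trace
      = (dK * (Cz * (P * (Acᵀ * (M * Bu))))).trace := by
    simp only [Matrix.mul_assoc]; symm
    rw [trace_rot]; simp only [Matrix.mul_assoc]
  rw [Matrix.add_mul, Matrix.trace_add, Matrix.add_mul, Matrix.trace_add,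
    e1, e2, e3, e4, e5]
  ring
end

section
/- Let P be a real symmetric positive semidefinite N×N matrix, C ∈ ℝ^{q×N}, and S ∈ ℝ^{q×q} such that (C·P·Cᵀ)·S·(C·P·Cᵀ) = C·P·Cᵀ. Then P·Cᵀ·S·C·P·Cᵀ = P·Cᵀ. -/
open Matrix

/-- **Pseudoinverse property through a positive semidefinite factor.**
If `P` is real symmetric positive semidefinite and `S` satisfies the first Moore–Penrose
condition `(C P Cᵀ) S (C P Cᵀ) = C P Cᵀ`, then `P Cᵀ S C P Cᵀ = P Cᵀ`. -/
theorem psd_pseudoinverse_property {N q : ℕ}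
    (P : Matrix (Fin N) (Fin N) ℝ) (hP : P.PosSemidef)
    (C : Matrix (Fin q) (Fin N) ℝ) (S : Matrix (Fin q) (Fin q) ℝ)
    (hS : (C * P * Cᵀ) * S * (C * P * Cᵀ) = C * P * Cᵀ) :
    P * Cᵀ * S * C * P * Cᵀ = P * Cᵀ := by
  open scoped MatrixOrder in set L := CFC.sqrt P with hLdef
  have hLsym : Lᵀ = L := by open scoped MatrixOrder in exact (CFC.sqrt_nonneg P).posSemidef.isHermitian
  have hLL : L * L = P := by open scoped MatrixOrder in exact CFC.sqrt_mul_sqrt_self P hP.nonneg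
  set B := C * L with hBdef
  have hBt : Bᵀ = L * Cᵀ := by
    rw [hBdef, transpose_mul, hLsym]
  have hCPC : C * P * Cᵀ = B * Bᵀ := by
    rw [hBt, hBdef, ← hLL]; simp [Matrix.mul_assoc]
  set E := S * (B * Bᵀ) - 1 with hEdef
  have hBD : B * (Bᵀ * E) = 0 := by
    have : B * Bᵀ * S * (B * Bᵀ) = B * Bᵀ := by rw [← hCPC, hS, hCPC]
    simp only [hEdef, Matrix.mul_sub, Matrix.mul_one, sub_eq_zero]
    calc B * (Bᵀ * (S * (B * Bᵀ))) = B * Bᵀ * S * (B * Bᵀ) := by simp [Matrix.mul_assoc]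
      _ = B * Bᵀ := this
  have hD : Bᵀ * E = 0 := by
    have h2 : (Bᵀ * E)ᴴ * (Bᵀ * E) = 0 := by
      have : (Bᵀ * E)ᴴ = Eᵀ * B := by
        simp [conjTranspose_mul, Matrix.conjTranspose_eq_transpose_of_trivial]
      rw [this, Matrix.mul_assoc, hBD, Matrix.mul_zero]
    exact (Matrix.conjTranspose_mul_self_eq_zero).mp h2
  have key : L * (Bᵀ * E) = 0 := by rw [hD, Matrix.mul_zero]
  have hLB : L * Bᵀ = P * Cᵀ := by rw [hBt, ← Matrix.mul_assoc, hLL]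
  have : L * Bᵀ * (S * (B * Bᵀ)) - L * Bᵀ = 0 := by
    calc L * Bᵀ * (S * (B * Bᵀ)) - L * Bᵀ = L * (Bᵀ * E) := by
          simp only [hEdef, Matrix.mul_sub, Matrix.mul_one, Matrix.mul_assoc]
      _ = 0 := key
  have h3 : L * Bᵀ * (S * (B * Bᵀ)) = L * Bᵀ := sub_eq_zero.mp this
  rw [hLB, ← hCPC] at h3
  calc P * Cᵀ * S * C * P * Cᵀ = P * Cᵀ * (S * (C * P * Cᵀ)) := by simp [Matrix.mul_assoc]
    _ = P * Cᵀ := h3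
end

section
/- Let 𝒜, P, M be real N×N matrices, B_u ∈ ℝ^{N×m}, B_w ∈ ℝ^{N×r}, B_v ∈ ℝ^{N×s}, C_z ∈ ℝ^{q×N}, R_u, Q_w, R_v symmetric real matrices of sizes m×m, r×r, s×s, and S_P ∈ ℝ^{q×q}. Assume P, M, S_P are symmetric, R_u + B_uᵀ·M·B_u is invertible with symmetric inverse S_M = (R_u + B_uᵀ·M·B_u)⁻¹, and S_P·(C_z·P·C_zᵀ)·S_P = S_P. Set K = −S_M·B_uᵀ·M·𝒜·P·C_zᵀ·S_P. If P = (𝒜 + B_u·K·C_z)·P·(𝒜 + B_u·K·C_z)ᵀ + B_w·Q_w·B_wᵀ + B_v·R_v·B_vᵀ, then P = 𝒜·P·𝒜ᵀ − 𝒜·P·C_zᵀ·S_P·C_z·P·𝒜ᵀ + B_w·Q_w·B_wᵀ + B_v·R_v·B_vᵀ + (I − M·B_u·S_M·B_uᵀ)ᵀ·𝒜·P·C_zᵀ·S_P·C_z·P·𝒜ᵀ·(I − M·B_u·S_M·B_uᵀ). -/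
open Matrix

set_option maxHeartbeats 4000000 in
/-- **Riccati equation for `P` in the behavioral LQG solution (Theorem 1).**
With the optimal gain `K = -S_M B_uᵀ M 𝒜 P C_zᵀ S_P`, the closed-loop Lyapunov equation
`P = 𝒜_c P 𝒜_cᵀ + B_w Q_w B_wᵀ + B_v R_v B_vᵀ` implies the coupled Riccati equation
`P = 𝒜 P 𝒜ᵀ - 𝒜 P C_zᵀ S_P C_z P 𝒜ᵀ + B_w Q_w B_wᵀ + B_v R_v B_vᵀ
   + (I - M B_u S_M B_uᵀ)ᵀ 𝒜 P C_zᵀ S_P C_z P 𝒜ᵀ (I - M B_u S_M B_uᵀ)`. -/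
theorem behavioral_riccati_P {N m r s q : ℕ}
    (A P M : Matrix (Fin N) (Fin N) ℝ)
    (Bu : Matrix (Fin N) (Fin m) ℝ) (Bw : Matrix (Fin N) (Fin r) ℝ)
    (Bv : Matrix (Fin N) (Fin s) ℝ) (Cz : Matrix (Fin q) (Fin N) ℝ)
    (Ru : Matrix (Fin m) (Fin m) ℝ) (Qw : Matrix (Fin r) (Fin r) ℝ)
    (Rv : Matrix (Fin s) (Fin s) ℝ) (SP : Matrix (Fin q) (Fin q) ℝ)
    (hRu : Ruᵀ = Ru) (hQw : Qwᵀ = Qw) (hRv : Rvᵀ = Rv)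
    (hP : Pᵀ = P) (hM : Mᵀ = M) (hSP : SPᵀ = SP)
    (hinv : IsUnit (Ru + Buᵀ * M * Bu).det)
    (SM : Matrix (Fin m) (Fin m) ℝ) (hSM : SM = (Ru + Buᵀ * M * Bu)⁻¹) (hSMsymm : SMᵀ = SM)
    (hpseudo : SP * (Cz * P * Czᵀ) * SP = SP)
    (K : Matrix (Fin m) (Fin q) ℝ)
    (hK : K = -(SM * Buᵀ * M * A * P * Czᵀ * SP))
    (hlyap : P = (A + Bu * K * Cz) * P * (A + Bu * K * Cz)ᵀ + Bw * Qw * Bwᵀ + Bv * Rv * Bvᵀ) :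
    P = A * P * Aᵀ - A * P * Czᵀ * SP * Cz * P * Aᵀ + Bw * Qw * Bwᵀ + Bv * Rv * Bvᵀ
      + (1 - M * Bu * SM * Buᵀ)ᵀ * (A * P * Czᵀ * SP * Cz * P * Aᵀ)
          * (1 - M * Bu * SM * Buᵀ) := by
  have hKt : Kᵀ = -(SP * Cz * P * Aᵀ * M * Bu * SM) := by
    rw [hK]
    simp only [Matrix.transpose_neg, Matrix.transpose_mul, Matrix.transpose_transpose,
      hP, hM, hSP, hSMsymm, Matrix.mul_assoc]
  have hps : ∀ (X : Matrix (Fin q) (Fin N) ℝ),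
      SP * (Cz * (P * (Czᵀ * (SP * X)))) = SP * X := by
    intro X
    calc SP * (Cz * (P * (Czᵀ * (SP * X)))) = SP * (Cz * P * Czᵀ) * SP * X := by
          simp only [Matrix.mul_assoc]
      _ = SP * X := by rw [hpseudo]
  have hquart : Bu * K * Cz * P * Czᵀ * Kᵀ * Buᵀ
      = Bu * SM * Buᵀ * M * A * P * Czᵀ * SP * Cz * P * Aᵀ * M * Bu * SM * Buᵀ := by
    rw [hKt, hK]
    simp only [Matrix.neg_mul, Matrix.mul_neg, neg_neg, Matrix.mul_assoc]
    rw [hps]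
  have hexp : (A + Bu * K * Cz) * P * (A + Bu * K * Cz)ᵀ
      = A * P * Aᵀ + A * P * Czᵀ * Kᵀ * Buᵀ + Bu * K * Cz * P * Aᵀ
        + Bu * K * Cz * P * Czᵀ * Kᵀ * Buᵀ := by
    simp only [Matrix.transpose_add, Matrix.transpose_mul]
    noncomm_ring
    simp only [Matrix.mul_assoc]
  conv_lhs => rw [hlyap]
  rw [hexp, hquart, hKt, hK]
  simp only [Matrix.transpose_sub, Matrix.transpose_one, Matrix.transpose_mul,
    Matrix.transpose_transpose, hM, hSMsymm]
  simp only [Matrix.sub_mul, Matrix.mul_sub, Matrix.add_mul, Matrix.mul_add,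
    Matrix.one_mul, Matrix.mul_one, Matrix.neg_mul, Matrix.mul_neg, neg_neg,
    Matrix.mul_assoc]
  abel
end

section
/- Let 𝒜, P, M, Q_z be real N×N matrices, B_u ∈ ℝ^{N×m}, C_z ∈ ℝ^{q×N}, R_u ∈ ℝ^{m×m} symmetric, and S_P ∈ ℝ^{q×q}. Assume P, M, Q_z, S_P are symmetric and R_u + B_uᵀ·M·B_u is invertible with symmetric inverse S_M = (R_u + B_uᵀ·M·B_u)⁻¹. Set K = −S_M·B_uᵀ·M·𝒜·P·C_zᵀ·S_P. If M = (𝒜 + B_u·K·C_z)ᵀ·M·(𝒜 + B_u·K·C_z) + Q_z + C_zᵀ·Kᵀ·R_u·K·C_z, then M = 𝒜ᵀ·M·𝒜 − 𝒜ᵀ·M·B_u·S_M·B_uᵀ·M·𝒜 + Q_z + (I − P·C_zᵀ·S_P·C_z)ᵀ·𝒜ᵀ·M·B_u·S_M·B_uᵀ·M·𝒜·(I − P·C_zᵀ·S_P·C_z). -/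
open Matrix

set_option maxHeartbeats 4000000 in
/-- **Riccati equation for `M` in the behavioral LQG solution (Theorem 1).**
With the optimal gain `K = -S_M B_uᵀ M 𝒜 P C_zᵀ S_P`, the closed-loop cost-to-go equation
`M = 𝒜_cᵀ M 𝒜_c + Q_z + C_zᵀ Kᵀ R_u K C_z` implies the coupled Riccati equation
`M = 𝒜ᵀ M 𝒜 - 𝒜ᵀ M B_u S_M B_uᵀ M 𝒜 + Q_z
   + (I - P C_zᵀ S_P C_z)ᵀ 𝒜ᵀ M B_u S_M B_uᵀ M 𝒜 (I - P C_zᵀ S_P C_z)`. -/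
theorem behavioral_riccati_M {N m q : ℕ}
    (A P M Qz : Matrix (Fin N) (Fin N) ℝ)
    (Bu : Matrix (Fin N) (Fin m) ℝ) (Cz : Matrix (Fin q) (Fin N) ℝ)
    (Ru : Matrix (Fin m) (Fin m) ℝ) (SP : Matrix (Fin q) (Fin q) ℝ)
    (hRu : Ruᵀ = Ru) (hP : Pᵀ = P) (hM : Mᵀ = M) (hQz : Qzᵀ = Qz) (hSP : SPᵀ = SP)
    (hinv : IsUnit (Ru + Buᵀ * M * Bu).det)
    (SM : Matrix (Fin m) (Fin m) ℝ) (hSM : SM = (Ru + Buᵀ * M * Bu)⁻¹) (hSMsymm : SMᵀ = SM)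
    (K : Matrix (Fin m) (Fin q) ℝ)
    (hK : K = -(SM * Buᵀ * M * A * P * Czᵀ * SP))
    (hcost : M = (A + Bu * K * Cz)ᵀ * M * (A + Bu * K * Cz) + Qz + Czᵀ * Kᵀ * Ru * K * Cz) :
    M = Aᵀ * M * A - Aᵀ * M * Bu * SM * Buᵀ * M * A + Qz
      + (1 - P * Czᵀ * SP * Cz)ᵀ * (Aᵀ * M * Bu * SM * Buᵀ * M * A)
          * (1 - P * Czᵀ * SP * Cz) := by
  have hE : SM * (Ru + Buᵀ * M * Bu) = 1 := by
    rw [hSM]; exact Matrix.nonsing_inv_mul _ hinv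
  calc M = (A + Bu * K * Cz)ᵀ * M * (A + Bu * K * Cz) + Qz + Czᵀ * Kᵀ * Ru * K * Cz := hcost
    _ = Aᵀ * M * A + Qz
        - Aᵀ * M * Bu * SM * Buᵀ * M * A * (P * Czᵀ * SP * Cz)
        - (Czᵀ * SP * Cz * P) * (Aᵀ * M * Bu * SM * Buᵀ * M * A)
        + (Czᵀ * SP * Cz * P) *
            ((Aᵀ * M * Bu) * (SM * (Ru + Buᵀ * M * Bu) * SM) * (Buᵀ * M * A)) *
            (P * Czᵀ * SP * Cz) := by
        rw [hK]
        simp only [Matrix.transpose_add, Matrix.transpose_mul, Matrix.transpose_neg,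
          Matrix.transpose_transpose, hRu, hP, hM, hQz, hSP, hSMsymm]
        simp only [Matrix.mul_assoc, Matrix.mul_add, Matrix.add_mul, Matrix.neg_mul,
          Matrix.mul_neg, neg_neg, sub_eq_add_neg, Matrix.mul_one, Matrix.one_mul]
        abel
    _ = Aᵀ * M * A + Qz
        - Aᵀ * M * Bu * SM * Buᵀ * M * A * (P * Czᵀ * SP * Cz)
        - (Czᵀ * SP * Cz * P) * (Aᵀ * M * Bu * SM * Buᵀ * M * A)
        + (Czᵀ * SP * Cz * P) * ((Aᵀ * M * Bu) * SM * (Buᵀ * M * A)) *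
            (P * Czᵀ * SP * Cz) := by
        rw [hE, one_mul]
    _ = Aᵀ * M * A - Aᵀ * M * Bu * SM * Buᵀ * M * A + Qz
        + (1 - P * Czᵀ * SP * Cz)ᵀ * (Aᵀ * M * Bu * SM * Buᵀ * M * A)
            * (1 - P * Czᵀ * SP * Cz) := by
        simp only [Matrix.transpose_sub, Matrix.transpose_one, Matrix.transpose_mul,
          Matrix.transpose_transpose, hP, hSP]
        simp only [Matrix.mul_assoc, Matrix.mul_add, Matrix.add_mul, Matrix.neg_mul,
          Matrix.mul_neg, neg_neg, sub_eq_add_neg, Matrix.mul_one, Matrix.one_mul]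
        abel
end
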